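/- Let (C, δ, α) be a Hom-coassociative coalgebra and (M, β) a C-comodule with structure map Δ: M → C⊗M. Then Δ̃ = (α²⊗Id_M)∘Δ is the structure map of another C-comodule structure on (M, β). -/

import Mathlib

open TensorProduct

/-- Flip on a tensor product. -/
noncomputable def tauT (K A B : Type*) [Field K] [AddCommGroup A] [Module K A]
    [AddCommGroup B] [Module K B] : A ⊗[K] B →ₗ[K] B ⊗[K] A :=
  (TensorProduct.comm K A B).toLinearMap

/-- Cyclic permutation x₁⊗x₂⊗x₃ ↦ x₃⊗x₁⊗x₂ on A⊗(A⊗A). -/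
noncomputable def cyc (K A : Type*) [Field K] [AddCommGroup A] [Module K A] :
    A ⊗[K] (A ⊗[K] A) →ₗ[K] A ⊗[K] (A ⊗[K] A) :=
  (TensorProduct.comm K (A ⊗[K] A) A).toLinearMap ∘ₗ
    (TensorProduct.assoc K A A A).symm.toLinearMap

/-- τ⊗Id acting on the first two factors of A⊗(A⊗M). -/
noncomputable def swap12 (K A M : Type*) [Field K] [AddCommGroup A] [Module K A]
    [AddCommGroup M] [Module K M] : A ⊗[K] (A ⊗[K] M) →ₗ[K] A ⊗[K] (A ⊗[K] M) :=
  (TensorProduct.assoc K A A M).toLinearMap ∘ₗ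
    TensorProduct.map (tauT K A A) LinearMap.id ∘ₗ
      (TensorProduct.assoc K A A M).symm.toLinearMap

/-- Comodule over a Hom-coassociative coalgebra (C, δ, α). -/
def IsHomComodule (K C M : Type*) [Field K] [AddCommGroup C] [Module K C]
    [AddCommGroup M] [Module K M] (δ : C →ₗ[K] C ⊗[K] C) (α : C →ₗ[K] C)
    (Δ : M →ₗ[K] C ⊗[K] M) (β : M →ₗ[K] M) : Prop :=
  Δ ∘ₗ β = TensorProduct.map α β ∘ₗ Δ ∧
  TensorProduct.map α Δ ∘ₗ Δ =
    (TensorProduct.assoc K C C M).toLinearMap ∘ₗ TensorProduct.map δ β ∘ₗ Δ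

/-- Comodule over a Hom-Lie coalgebra (L, γ, α). -/
def IsHomLieComodule (K L M : Type*) [Field K] [AddCommGroup L] [Module K L]
    [AddCommGroup M] [Module K M] (γ : L →ₗ[K] L ⊗[K] L) (α : L →ₗ[K] L)
    (Γ : M →ₗ[K] L ⊗[K] M) (β : M →ₗ[K] M) : Prop :=
  Γ ∘ₗ β = TensorProduct.map α β ∘ₗ Γ ∧
  (TensorProduct.assoc K L L M).toLinearMap ∘ₗ TensorProduct.map γ β ∘ₗ Γ =
    TensorProduct.map α Γ ∘ₗ Γ - swap12 K L M ∘ₗ TensorProduct.map α Γ ∘ₗ Γ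

/-- Hom-Poisson comodule over (A, δ, γ, α). -/
def IsHomPoissonComodule (K A M : Type*) [Field K] [AddCommGroup A] [Module K A]
    [AddCommGroup M] [Module K M] (δ γ : A →ₗ[K] A ⊗[K] A) (α : A →ₗ[K] A)
    (Δ Γ : M →ₗ[K] A ⊗[K] M) (β : M →ₗ[K] M) : Prop :=
  IsHomComodule K A M δ α Δ β ∧
  IsHomLieComodule K A M γ α Γ β ∧
  TensorProduct.map α Δ ∘ₗ Γ =
    (TensorProduct.assoc K A A M).toLinearMap ∘ₗ TensorProduct.map γ β ∘ₗ Δ +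
      swap12 K A M ∘ₗ TensorProduct.map α Γ ∘ₗ Δ ∧
  (TensorProduct.assoc K A A M).toLinearMap ∘ₗ TensorProduct.map δ β ∘ₗ Γ =
    TensorProduct.map α Γ ∘ₗ Δ + swap12 K A M ∘ₗ TensorProduct.map α Γ ∘ₗ Δ

/-- Cocommutative Hom-Poisson coalgebra. -/
def IsCocommHomPoissonCoalgebra (K A : Type*) [Field K] [AddCommGroup A] [Module K A]
    (δ γ : A →ₗ[K] A ⊗[K] A) (α : A →ₗ[K] A) : Prop :=
  δ = tauT K A A ∘ₗ δ ∧
  δ ∘ₗ α = TensorProduct.map α α ∘ₗ δ ∧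
  TensorProduct.map α δ ∘ₗ δ =
    (TensorProduct.assoc K A A A).toLinearMap ∘ₗ TensorProduct.map δ α ∘ₗ δ ∧
  γ = -(tauT K A A ∘ₗ γ) ∧
  γ ∘ₗ α = TensorProduct.map α α ∘ₗ γ ∧
  (LinearMap.id + cyc K A + cyc K A ∘ₗ cyc K A) ∘ₗ TensorProduct.map α γ ∘ₗ γ = 0 ∧
  TensorProduct.map α δ ∘ₗ γ =
    (TensorProduct.assoc K A A A).toLinearMap ∘ₗ TensorProduct.map γ α ∘ₗ δ +
      swap12 K A A ∘ₗ TensorProduct.map α γ ∘ₗ δ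

theorem stmt16 {K C M : Type*} [Field K] [CharZero K] [AddCommGroup C] [Module K C]
    [AddCommGroup M] [Module K M]
    (δ : C →ₗ[K] C ⊗[K] C) (α : C →ₗ[K] C)
    (hcoalg : δ ∘ₗ α = TensorProduct.map α α ∘ₗ δ ∧
      TensorProduct.map α δ ∘ₗ δ =
        (TensorProduct.assoc K C C C).toLinearMap ∘ₗ TensorProduct.map δ α ∘ₗ δ)
    (Δ : M →ₗ[K] C ⊗[K] M) (β : M →ₗ[K] M)
    (hcom : IsHomComodule K C M δ α Δ β) :
    IsHomComodule K C M δ α (TensorProduct.map (α ∘ₗ α) LinearMap.id ∘ₗ Δ) β := by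
  obtain ⟨h1, h2⟩ := hcom
  obtain ⟨hc1, _⟩ := hcoalg
  constructor
  · calc (TensorProduct.map (α ∘ₗ α) LinearMap.id ∘ₗ Δ) ∘ₗ β
        = TensorProduct.map (α ∘ₗ α) LinearMap.id ∘ₗ (Δ ∘ₗ β) := by
          rw [LinearMap.comp_assoc]
      _ = TensorProduct.map (α ∘ₗ α) LinearMap.id ∘ₗ TensorProduct.map α β ∘ₗ Δ := by
          rw [h1]
      _ = TensorProduct.map ((α ∘ₗ α) ∘ₗ α) (LinearMap.id ∘ₗ β) ∘ₗ Δ := by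
          rw [← LinearMap.comp_assoc, ← TensorProduct.map_comp]
      _ = TensorProduct.map (α ∘ₗ (α ∘ₗ α)) (β ∘ₗ LinearMap.id) ∘ₗ Δ := by
          rw [LinearMap.comp_assoc, LinearMap.id_comp, LinearMap.comp_id]
      _ = TensorProduct.map α β ∘ₗ (TensorProduct.map (α ∘ₗ α) LinearMap.id ∘ₗ Δ) := by
          rw [← LinearMap.comp_assoc Δ (TensorProduct.map (α ∘ₗ α) LinearMap.id)
            (TensorProduct.map α β), ← TensorProduct.map_comp]
  · have hδ2 : δ ∘ₗ (α ∘ₗ α) = TensorProduct.map (α ∘ₗ α) (α ∘ₗ α) ∘ₗ δ := by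
      rw [← LinearMap.comp_assoc, hc1, LinearMap.comp_assoc, hc1,
        ← LinearMap.comp_assoc, ← TensorProduct.map_comp]
    have key : TensorProduct.map (α ∘ₗ α) (TensorProduct.map (α ∘ₗ α) LinearMap.id)
        ∘ₗ (TensorProduct.map α Δ ∘ₗ Δ) =
        TensorProduct.map ((α ∘ₗ α) ∘ₗ α)
          ((TensorProduct.map (α ∘ₗ α) LinearMap.id ∘ₗ Δ)) ∘ₗ Δ := by
      rw [← LinearMap.comp_assoc, ← TensorProduct.map_comp]
    calc TensorProduct.map α (TensorProduct.map (α ∘ₗ α) LinearMap.id ∘ₗ Δ) ∘ₗ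
          TensorProduct.map (α ∘ₗ α) LinearMap.id ∘ₗ Δ
        = TensorProduct.map (α ∘ₗ (α ∘ₗ α))
            ((TensorProduct.map (α ∘ₗ α) LinearMap.id ∘ₗ Δ) ∘ₗ LinearMap.id) ∘ₗ Δ := by
          rw [← LinearMap.comp_assoc, ← TensorProduct.map_comp]
      _ = TensorProduct.map ((α ∘ₗ α) ∘ₗ α)
            (TensorProduct.map (α ∘ₗ α) LinearMap.id ∘ₗ Δ) ∘ₗ Δ := by
          rw [LinearMap.comp_assoc α α α, LinearMap.comp_id]
      _ = TensorProduct.map (α ∘ₗ α) (TensorProduct.map (α ∘ₗ α) LinearMap.id)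
            ∘ₗ (TensorProduct.map α Δ ∘ₗ Δ) := key.symm
      _ = TensorProduct.map (α ∘ₗ α) (TensorProduct.map (α ∘ₗ α) LinearMap.id)
            ∘ₗ (TensorProduct.assoc K C C M).toLinearMap ∘ₗ TensorProduct.map δ β ∘ₗ Δ := by
          rw [h2]
      _ = ((TensorProduct.map (α ∘ₗ α) (TensorProduct.map (α ∘ₗ α) LinearMap.id)
            ∘ₗ (TensorProduct.assoc K C C M).toLinearMap) ∘ₗ TensorProduct.map δ β) ∘ₗ Δ := by
          rw [LinearMap.comp_assoc, LinearMap.comp_assoc]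
      _ = (((TensorProduct.assoc K C C M).toLinearMap ∘ₗ
            TensorProduct.map (TensorProduct.map (α ∘ₗ α) (α ∘ₗ α)) LinearMap.id)
              ∘ₗ TensorProduct.map δ β) ∘ₗ Δ := by
          rw [TensorProduct.map_map_comp_assoc_eq]
      _ = ((TensorProduct.assoc K C C M).toLinearMap ∘ₗ
            TensorProduct.map (TensorProduct.map (α ∘ₗ α) (α ∘ₗ α) ∘ₗ δ)
              (LinearMap.id ∘ₗ β)) ∘ₗ Δ := by
          rw [LinearMap.comp_assoc _ _ (TensorProduct.assoc K C C M).toLinearMap,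
            ← TensorProduct.map_comp]
      _ = ((TensorProduct.assoc K C C M).toLinearMap ∘ₗ
            TensorProduct.map (δ ∘ₗ (α ∘ₗ α)) (β ∘ₗ LinearMap.id)) ∘ₗ Δ := by
          rw [hδ2, LinearMap.id_comp, LinearMap.comp_id]
      _ = (TensorProduct.assoc K C C M).toLinearMap ∘ₗ TensorProduct.map δ β ∘ₗ
            TensorProduct.map (α ∘ₗ α) LinearMap.id ∘ₗ Δ := by
          rw [TensorProduct.map_comp, LinearMap.comp_assoc, ← LinearMap.comp_assoc
            (TensorProduct.map (α ∘ₗ α) LinearMap.id ∘ₗ Δ)]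
          rw [LinearMap.comp_assoc, LinearMap.comp_assoc]
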